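/- arXiv:2005.12556 — 3 statements merged into one kernel-verified Lean document; each statement's English description precedes it below -/
import Mathlib

section
/- Let θ, s, G > 0, let X̃ ~ Exp(θ) and T̃ ~ Uniform[0,G] be independent. Then E[ X̃ · 1_{T̃ ≤ X̃ ≤ T̃ + s} ] = (−s/(Gθ) − 2/(Gθ²))·exp(−θs) + (−1/θ − 2/(Gθ²))·exp(−θG) + ((G+s)/(Gθ) + 2/(Gθ²))·exp(−θ(G+s)) + 2/(Gθ²). -/
open MeasureTheory ProbabilityTheory Real Set Filter

/-- The uniform probability measure on the interval `[0, G]`. -/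
noncomputable def uniformMeasure (G : ℝ) : Measure ℝ :=
  (ENNReal.ofReal G)⁻¹ • (volume.restrict (Set.Icc 0 G))

lemma expPDFReal_of_nonneg {r x : ℝ} (hx : 0 ≤ x) :
    exponentialPDFReal r x = r * Real.exp (-(r * x)) := by
  simp [exponentialPDFReal, gammaPDFReal, hx, Real.Gamma_one]

lemma expMeasure_eq (r : ℝ) :
    expMeasure r = volume.withDensity
      (fun x => ((exponentialPDFReal r x).toNNReal : ENNReal)) := rfl

/-- `E[X̃ · 1_{T̃ ≤ X̃ ≤ T̃ + s}]` for independent `X̃ ~ Exp(θ)` and `T̃ ~ Uniform[0,G]`. -/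
theorem truncated_first_moment
    {Ω : Type*} [MeasurableSpace Ω] (P : Measure Ω) [IsProbabilityMeasure P]
    (θ s G : ℝ) (hθ : 0 < θ) (hs : 0 < s) (hG : 0 < G)
    (X T : Ω → ℝ) (hX : Measurable X) (hT : Measurable T)
    (hXlaw : P.map X = expMeasure θ)
    (hTlaw : P.map T = uniformMeasure G)
    (hindep : IndepFun X T P) :
    ∫ ω in {ω | T ω ≤ X ω ∧ X ω ≤ T ω + s}, X ω ∂P
      = (-(s / (G * θ)) - 2 / (G * θ ^ 2)) * exp (-(θ * s))
        + (-(1 / θ) - 2 / (G * θ ^ 2)) * exp (-(θ * G))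
        + ((G + s) / (G * θ) + 2 / (G * θ ^ 2)) * exp (-(θ * (G + s)))
        + 2 / (G * θ ^ 2) := by
  have hθ' : θ ≠ 0 := hθ.ne'
  set μ := expMeasure θ with hμ_def
  set ν := uniformMeasure G with hν_def
  have hμ : IsProbabilityMeasure μ := isProbabilityMeasure_expMeasure hθ
  have hν : IsProbabilityMeasure ν := by
    constructor
    rw [hν_def, uniformMeasure, Measure.smul_apply,
      Measure.restrict_apply MeasurableSet.univ, Set.univ_inter, Real.volume_Icc,
      smul_eq_mul, sub_zero]
    exact ENNReal.inv_mul_cancel (by simp [hG]) ENNReal.ofReal_ne_top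
  set A : Set (ℝ × ℝ) := {p | p.2 ≤ p.1 ∧ p.1 ≤ p.2 + s} with hA_def
  have hA : MeasurableSet A := (measurableSet_le measurable_snd measurable_fst).inter
    (measurableSet_le measurable_fst (measurable_snd.add_const s))
  set f : ℝ × ℝ → ℝ := A.indicator (fun p => p.1) with hf_def
  have hf_meas : Measurable f := measurable_fst.indicator hA
  have hjoint : P.map (fun ω => (X ω, T ω)) = μ.prod ν := by
    rw [← hXlaw, ← hTlaw]
    exact (indepFun_iff_map_prod_eq_prod_map_map hX.aemeasurable hT.aemeasurable).1 hindep
  have hS : MeasurableSet {ω | T ω ≤ X ω ∧ X ω ≤ T ω + s} :=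
    (measurableSet_le hT hX).inter (measurableSet_le hX (hT.add_const s))
  -- Step 1: rewrite as integral against the product measure
  have step1 : ∫ ω in {ω | T ω ≤ X ω ∧ X ω ≤ T ω + s}, X ω ∂P = ∫ p, f p ∂(μ.prod ν) := by
    rw [← hjoint, integral_map (hX.prodMk hT).aemeasurable hf_meas.aestronglyMeasurable,
      ← integral_indicator hS]
    congr 1
  -- Integrability
  have h2 : ∀ᵐ p : ℝ × ℝ ∂(μ.prod ν), p.2 ∈ Set.Icc 0 G := by
    rw [ae_iff]
    have hset : {p : ℝ × ℝ | ¬ p.2 ∈ Set.Icc 0 G} = Set.univ ×ˢ (Set.Icc 0 G)ᶜ := by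
      ext p; simp
    rw [hset, Measure.prod_prod]
    have : ν (Set.Icc 0 G)ᶜ = 0 := by
      rw [hν_def, uniformMeasure, Measure.smul_apply,
        Measure.restrict_apply (measurableSet_Icc.compl), Set.compl_inter_self]
      simp
    simp [this]
  have hint : Integrable f (μ.prod ν) := by
    refine (integrable_const (G + s)).mono' hf_meas.aestronglyMeasurable ?_
    filter_upwards [h2] with p hp
    by_cases h : p ∈ A
    · rw [hf_def, Set.indicator_of_mem h]
      rw [Real.norm_eq_abs, abs_of_nonneg (le_trans hp.1 h.1)]
      calc p.1 ≤ p.2 + s := h.2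
        _ ≤ G + s := by linarith [hp.2]
    · rw [hf_def, Set.indicator_of_notMem h]
      simp; positivity
  -- Step 2: Fubini
  have step2 : ∫ p, f p ∂(μ.prod ν) = ∫ t, (∫ x, f (x, t) ∂μ) ∂ν :=
    integral_prod_symm f hint
  -- inner integral
  have hpdf_meas : Measurable fun x => (exponentialPDFReal θ x).toNNReal :=
    (measurable_exponentialPDFReal θ).real_toNNReal
  have inner_eq : ∀ t ∈ Set.Icc (0:ℝ) G, (∫ x, f (x, t) ∂μ) =
      (t + 1/θ) * exp (-(θ*t)) - (t + s + 1/θ) * exp (-(θ*(t+s))) := by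
    intro t ht
    have h1 : (∫ x, f (x, t) ∂μ)
        = ∫ x, (exponentialPDFReal θ x).toNNReal • f (x, t) := by
      rw [hμ_def, expMeasure_eq, integral_withDensity_eq_integral_smul hpdf_meas]
    rw [h1]
    have h2 : (fun x => (exponentialPDFReal θ x).toNNReal • f (x, t))
        = (Set.Icc t (t+s)).indicator (fun x => θ * exp (-(θ*x)) * x) := by
      funext x
      by_cases hx : x ∈ Set.Icc t (t+s)
      · have hmem : ((x, t) : ℝ × ℝ) ∈ A := ⟨hx.1, by simpa using hx.2⟩
        rw [Set.indicator_of_mem hx, hf_def, Set.indicator_of_mem hmem]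
        have hx0 : (0:ℝ) ≤ x := le_trans ht.1 hx.1
        simp only [NNReal.smul_def, smul_eq_mul]
        rw [Real.coe_toNNReal _ (exponentialPDFReal_nonneg hθ x),
          expPDFReal_of_nonneg hx0]
      · have hmem : ((x, t) : ℝ × ℝ) ∉ A := by
          intro hc
          exact hx ⟨hc.1, by simpa using hc.2⟩
        rw [Set.indicator_of_notMem hx, hf_def, Set.indicator_of_notMem hmem]
        simp
    rw [h2, integral_indicator measurableSet_Icc, integral_Icc_eq_integral_Ioc,
      ← intervalIntegral.integral_of_le (by linarith : t ≤ t + s)]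
    have hderiv : ∀ x ∈ Set.uIcc t (t+s),
        HasDerivAt (fun x => -(x + 1/θ) * exp (-(θ*x))) (θ * exp (-(θ*x)) * x) x := by
      intro x _
      have he : HasDerivAt (fun x : ℝ => exp (-(θ*x))) (exp (-(θ*x)) * (-θ)) x := by
        have : HasDerivAt (fun x : ℝ => -(θ*x)) (-θ) x := by
          simpa using ((hasDerivAt_id x).const_mul (-θ))
        exact this.exp
      have hl : HasDerivAt (fun x : ℝ => -(x + 1/θ)) (-1) x := by
        exact ((hasDerivAt_id' x).add_const (1/θ)).neg
      have := hl.mul he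
      refine this.congr_deriv ?_
      field_simp
      ring
    rw [intervalIntegral.integral_eq_sub_of_hasDerivAt hderiv
      (Continuous.intervalIntegrable (by fun_prop) t (t+s))]
    ring
  -- outer integral
  have step3 : ∫ t, (∫ x, f (x, t) ∂μ) ∂ν
      = G⁻¹ * ∫ t in Set.Icc 0 G, (∫ x, f (x, t) ∂μ) := by
    rw [hν_def, uniformMeasure, integral_smul_measure, ENNReal.toReal_inv,
      ENNReal.toReal_ofReal hG.le, smul_eq_mul]
  have step4 : ∫ t in Set.Icc 0 G, (∫ x, f (x, t) ∂μ)
      = ∫ t in Set.Icc 0 G,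
        ((t + 1/θ) * exp (-(θ*t)) - (t + s + 1/θ) * exp (-(θ*(t+s)))) :=
    setIntegral_congr_fun measurableSet_Icc inner_eq
  have step5 : ∫ t in Set.Icc (0:ℝ) G,
      ((t + 1/θ) * exp (-(θ*t)) - (t + s + 1/θ) * exp (-(θ*(t+s))))
      = (-(G/θ + 2/θ^2) * exp (-(θ*G)) + ((G+s)/θ + 2/θ^2) * exp (-(θ*(G+s))))
        - (-(0/θ + 2/θ^2) * exp (-(θ*0)) + ((0+s)/θ + 2/θ^2) * exp (-(θ*(0+s)))) := by
    rw [integral_Icc_eq_integral_Ioc, ← intervalIntegral.integral_of_le hG.le]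
    have hderiv : ∀ t ∈ Set.uIcc (0:ℝ) G,
        HasDerivAt (fun t => -(t/θ + 2/θ^2) * exp (-(θ*t)) + ((t+s)/θ + 2/θ^2) * exp (-(θ*(t+s))))
          ((t + 1/θ) * exp (-(θ*t)) - (t + s + 1/θ) * exp (-(θ*(t+s)))) t := by
      intro t _
      have he1 : HasDerivAt (fun t : ℝ => exp (-(θ*t))) (exp (-(θ*t)) * (-θ)) t := by
        have : HasDerivAt (fun t : ℝ => -(θ*t)) (-θ) t := by
          simpa using ((hasDerivAt_id t).const_mul (-θ))
        exact this.exp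
      have he2 : HasDerivAt (fun t : ℝ => exp (-(θ*(t+s)))) (exp (-(θ*(t+s))) * (-θ)) t := by
        have : HasDerivAt (fun t : ℝ => -(θ*(t+s))) (-θ) t := by
          exact ((((hasDerivAt_id' t).add_const s).const_mul θ).neg).congr_deriv (by ring)
        exact this.exp
      have hl1 : HasDerivAt (fun t : ℝ => -(t/θ + 2/θ^2)) (-(1/θ)) t := by
        exact (((hasDerivAt_id' t).div_const θ).add_const (2/θ^2)).neg
      have hl2 : HasDerivAt (fun t : ℝ => (t+s)/θ + 2/θ^2) (1/θ) t := by
        simpa using (((hasDerivAt_id t).add_const s).div_const θ).add_const (2/θ^2)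
      have := (hl1.mul he1).add (hl2.mul he2)
      refine this.congr_deriv ?_
      field_simp
      ring
    rw [intervalIntegral.integral_eq_sub_of_hasDerivAt hderiv
      (Continuous.intervalIntegrable (by fun_prop) 0 G)]
  rw [step1, step2, step3, step4, step5]
  simp only [zero_div, zero_add, mul_zero, neg_zero, Real.exp_zero]
  field_simp
  ring
end

section
/- For all real θ > 0, s > 0 and G > 0, 2/θ² − s²·exp(−θs)/(1 − exp(−θs))² − G²·exp(−Gθ)/(1 − exp(−Gθ))² > 0. -/
open Real

lemma key_lt_one (x : ℝ) (hx : 0 < x) :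
    x ^ 2 * exp (-x) / (1 - exp (-x)) ^ 2 < 1 := by
  have hE : exp (-x) < 1 := by rw [exp_lt_one_iff]; linarith
  have hpos : 0 < 1 - exp (-x) := by linarith
  rw [div_lt_one (pow_pos hpos 2)]
  have hsinh : x / 2 < Real.sinh (x / 2) := Real.self_lt_sinh_iff.mpr (by linarith)
  rw [Real.sinh_eq] at hsinh
  have he : 0 < exp (-(x/2)) := exp_pos _
  have h1 : exp (-(x/2)) * exp (x/2) = 1 := by rw [← Real.exp_add]; simp
  have hee : exp (-(x/2)) * exp (-(x/2)) = exp (-x) := by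
    rw [← Real.exp_add]; ring_nf
  have hx2 : x * exp (-(x/2)) < 1 - exp (-x) := by
    have : x < exp (x/2) - exp (-(x/2)) := by linarith
    nlinarith
  have hxe : 0 < x * exp (-(x/2)) := by positivity
  nlinarith [sq_nonneg (x * exp (-(x/2)))]

/-- For all `θ, s, G > 0`, the derivative of the per-observation score is positive:
`2/θ² − s² e^{−θs}/(1 − e^{−θs})² − G² e^{−Gθ}/(1 − e^{−Gθ})² > 0`. -/
theorem score_derivative_pos (θ s G : ℝ) (hθ : 0 < θ) (hs : 0 < s) (hG : 0 < G) :
    0 < 2 / θ ^ 2 - s ^ 2 * exp (-(θ * s)) / (1 - exp (-(θ * s))) ^ 2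
        - G ^ 2 * exp (-(G * θ)) / (1 - exp (-(G * θ))) ^ 2 := by
  have h1 := key_lt_one (θ * s) (by positivity)
  have h2 := key_lt_one (G * θ) (by positivity)
  have hd1 : (0:ℝ) < (1 - exp (-(θ * s))) ^ 2 := by
    have : exp (-(θ * s)) < 1 := by rw [exp_lt_one_iff]; nlinarith
    have : 0 < 1 - exp (-(θ * s)) := by linarith
    positivity
  have hd2 : (0:ℝ) < (1 - exp (-(G * θ))) ^ 2 := by
    have : exp (-(G * θ)) < 1 := by rw [exp_lt_one_iff]; nlinarith
    have : 0 < 1 - exp (-(G * θ)) := by linarith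
    positivity
  have hθ2 : (0:ℝ) < θ ^ 2 := by positivity
  have e1 : s ^ 2 * exp (-(θ * s)) / (1 - exp (-(θ * s))) ^ 2
      = ((θ * s) ^ 2 * exp (-(θ * s)) / (1 - exp (-(θ * s))) ^ 2) / θ ^ 2 := by
    field_simp
  have e2 : G ^ 2 * exp (-(G * θ)) / (1 - exp (-(G * θ))) ^ 2
      = ((G * θ) ^ 2 * exp (-(G * θ)) / (1 - exp (-(G * θ))) ^ 2) / θ ^ 2 := by
    field_simp
  rw [e1, e2]
  have l1 : ((θ * s) ^ 2 * exp (-(θ * s)) / (1 - exp (-(θ * s))) ^ 2) / θ ^ 2 < 1 / θ ^ 2 := by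
    gcongr
  have l2 : ((G * θ) ^ 2 * exp (-(G * θ)) / (1 - exp (-(G * θ))) ^ 2) / θ ^ 2 < 1 / θ ^ 2 := by
    gcongr
  have : (2:ℝ) / θ ^ 2 = 1 / θ ^ 2 + 1 / θ ^ 2 := by ring
  linarith
end

section
/- Fix 0 < ε < 1, s, G > 0 and θ₀ ∈ (ε, 1/ε). Let (X̃_j, T̃_j), j = 1, 2, …, be i.i.d. pairs with X̃_j ~ Exp(θ₀) and T̃_j ~ Uniform[0,G] independent, and define Ψ_n(θ) = (1/n)·Σ_{j=1}^{n} 1_{T̃_j ≤ X̃_j ≤ T̃_j + s}·( X̃_j − 1/θ + α'(θ)/α(θ) ) for θ ∈ [ε, 1/ε], where α(θ) = (1 − exp(−θs))·(1 − exp(−Gθ))/(Gθ) and α' is its derivative. If θ̂_n are measurable random variables with values in [ε, 1/ε] such that Ψ_n(θ̂_n) converges in probability to 0, then θ̂_n converges in probability to θ₀. -/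
open MeasureTheory ProbabilityTheory Real Set Filter
open scoped ENNReal NNReal Topology

/-- The selection probability function `α(θ) = (1 − e^{−θs})(1 − e^{−Gθ})/(Gθ)`. -/
noncomputable def alphaFun (s G θ : ℝ) : ℝ :=
  (1 - exp (-(θ * s))) * (1 - exp (-(G * θ))) / (G * θ)

/-- The per-observation score `ψ_θ(x,t) = 1_{t ≤ x ≤ t+s}·(x − 1/θ + α'(θ)/α(θ))`. -/
noncomputable def psiFun (s G θ x t : ℝ) : ℝ :=
  (Set.Icc t (t + s)).indicator
    (fun _ => x - 1 / θ + deriv (alphaFun s G) θ / alphaFun s G θ) x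

/-- `2y < e^y - e^{-y}` for `y > 0`. -/
lemma two_mul_lt_exp_sub {y : ℝ} (hy : 0 < y) : 2 * y < exp y - exp (-y) := by
  have key : StrictMonoOn (fun y : ℝ => exp y - exp (-y) - 2 * y) (Ici 0) := by
    apply strictMonoOn_of_deriv_pos (convex_Ici 0)
    · fun_prop
    · intro x hx
      rw [interior_Ici] at hx
      have hd : HasDerivAt (fun y : ℝ => exp y - exp (-y) - 2 * y)
          (exp x - (exp (-x) * (-1)) - 2) x := by
        exact (((Real.hasDerivAt_exp x).sub
          (((Real.hasDerivAt_exp (-x)).comp x (hasDerivAt_neg x)))).sub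
          ((hasDerivAt_id x).const_mul 2)).congr_deriv (by ring)
      rw [hd.deriv]
      have h1 : exp x + exp (-x) > 2 := by
        have hne : exp (x/2) - exp (-(x/2)) ≠ 0 := by
          intro h
          have : exp (x/2) = exp (-(x/2)) := by linarith
          have := Real.exp_injective this
          have hx' : (0:ℝ) < x := hx
          linarith
        have hsq : 0 < (exp (x/2) - exp (-(x/2)))^2 := by positivity
        have e1 : exp (x/2) * exp (x/2) = exp x := by
          rw [← Real.exp_add]; ring_nf
        have e2 : exp (-(x/2)) * exp (-(x/2)) = exp (-x) := by
          rw [← Real.exp_add]; ring_nf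
        have e3 : exp (x/2) * exp (-(x/2)) = 1 := by
          rw [← Real.exp_add]; simp
        nlinarith [hsq]
      linarith
  have := key (self_mem_Ici) (le_of_lt hy) hy
  simpa using this

/-- auxiliary term in `hFun`. -/
noncomputable def gAux (a θ : ℝ) : ℝ := 1 / θ - a * exp (-(θ * a)) / (1 - exp (-(θ * a)))

lemma one_sub_exp_pos {a θ : ℝ} (ha : 0 < a) (hθ : 0 < θ) : 0 < 1 - exp (-(θ * a)) := by
  have : exp (-(θ * a)) < 1 := by
    rw [exp_lt_one_iff]; nlinarith
  linarith

lemma gAux_hasDerivAt {a θ : ℝ} (ha : 0 < a) (hθ : 0 < θ) :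
    HasDerivAt (gAux a) (-(1/θ^2) + a^2 * exp (-(θ*a)) / (1 - exp (-(θ*a)))^2) θ := by
  have hden := one_sub_exp_pos ha hθ
  have hder_e : HasDerivAt (fun θ : ℝ => exp (-(θ * a))) (exp (-(θ*a)) * (-a)) θ := by
    have : HasDerivAt (fun θ : ℝ => -(θ * a)) (-a) θ := by
      exact ((hasDerivAt_id θ).mul_const a).neg.congr_deriv (by ring)
    exact (Real.hasDerivAt_exp _).comp θ this
  have h1 : HasDerivAt (fun θ : ℝ => 1 / θ) (-(1/θ^2)) θ := by
    simpa [one_div] using (hasDerivAt_inv (ne_of_gt hθ))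
  have hnum : HasDerivAt (fun θ : ℝ => a * exp (-(θ * a))) (a * (exp (-(θ*a)) * (-a))) θ :=
    hder_e.const_mul a
  have hden' : HasDerivAt (fun θ : ℝ => 1 - exp (-(θ * a))) (-(exp (-(θ*a)) * (-a))) θ :=
    by exact ((hasDerivAt_const θ 1).sub hder_e).congr_deriv (by ring)
  have hq := hnum.div hden' (ne_of_gt hden)
  have := h1.sub hq
  refine this.congr_deriv ?_
  have h2 : (1 - exp (-(θ*a))) ≠ 0 := ne_of_gt hden
  field_simp
  ring

lemma gAux_strictAntiOn {a : ℝ} (ha : 0 < a) : StrictAntiOn (gAux a) (Ioi 0) := by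
  apply strictAntiOn_of_deriv_neg (convex_Ioi 0)
  · intro θ hθ
    have hθ' : (0:ℝ) < θ := hθ
    exact (gAux_hasDerivAt ha hθ').continuousAt.continuousWithinAt
  · intro θ hθ
    rw [interior_Ioi] at hθ
    have hθ' : (0:ℝ) < θ := hθ
    rw [(gAux_hasDerivAt ha hθ').deriv]
    -- need: a^2 e^{-θa}/(1-e^{-θa})^2 < 1/θ^2
    have hden := one_sub_exp_pos ha hθ'
    have key : a * θ * exp (-(θ*a)/2) < 1 - exp (-(θ*a)) := by
      have h2 := two_mul_lt_exp_sub (y := θ*a/2) (by nlinarith)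
      have e1 : exp (θ*a/2) * exp (-(θ*a)/2) = 1 := by
        rw [← Real.exp_add]; ring_nf; exact Real.exp_zero
      have e2 : exp (-(θ*a/2)) * exp (-(θ*a)/2) = exp (-(θ*a)) := by
        rw [← Real.exp_add]; ring_nf
      have e3 : (0:ℝ) < exp (-(θ*a)/2) := exp_pos _
      nlinarith [h2, e3]
    have hsq : (a * θ * exp (-(θ*a)/2))^2 < (1 - exp (-(θ*a)))^2 := by
      have h0 : 0 < a * θ * exp (-(θ*a)/2) := by positivity
      nlinarith
    have e4 : exp (-(θ*a)/2) * exp (-(θ*a)/2) = exp (-(θ*a)) := by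
      rw [← Real.exp_add]; ring_nf
    have heq : (a * θ * exp (-(θ*a)/2))^2 = a^2 * exp (-(θ*a)) * θ^2 := by
      rw [← e4]; ring
    have hlt : a^2 * exp (-(θ*a)) * θ^2 < (1 - exp (-(θ*a)))^2 := by
      rw [← heq]; exact hsq
    have hθ2 : (0:ℝ) < θ^2 := by positivity
    have hd2 : (0:ℝ) < (1 - exp (-(θ*a)))^2 := by positivity
    rw [← sub_neg]
    have : a^2 * exp (-(θ*a)) / (1 - exp (-(θ*a)))^2 < 1/θ^2 := by
      rw [div_lt_div_iff₀ hd2 hθ2]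
      nlinarith [hlt]
    linarith

noncomputable def hFun (s G θ : ℝ) : ℝ := gAux s θ + gAux G θ

lemma alphaFun_pos {s G θ : ℝ} (hs : 0 < s) (hG : 0 < G) (hθ : 0 < θ) :
    0 < alphaFun s G θ := by
  have h1 := one_sub_exp_pos hs hθ
  have h2 := one_sub_exp_pos hG hθ
  rw [mul_comm θ G] at h2
  unfold alphaFun
  positivity

lemma alphaFun_hasDerivAt {s G θ : ℝ} (hG : 0 < G) (hθ : 0 < θ) :
    HasDerivAt (alphaFun s G)
      (((s * exp (-(θ * s)) * (1 - exp (-(G * θ))) + (1 - exp (-(θ * s))) * (G * exp (-(G * θ)))) * (G * θ)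
        - (1 - exp (-(θ * s))) * (1 - exp (-(G * θ))) * G) / (G * θ)^2) θ := by
  have hd1 : HasDerivAt (fun θ : ℝ => 1 - exp (-(θ * s))) (s * exp (-(θ * s))) θ := by
    have : HasDerivAt (fun θ : ℝ => -(θ * s)) (-s) θ := by
      exact ((hasDerivAt_id θ).mul_const s).neg.congr_deriv (by ring)
    have := ((Real.hasDerivAt_exp _).comp θ this)
    exact ((hasDerivAt_const θ (1:ℝ)).sub this).congr_deriv (by ring)
  have hd2 : HasDerivAt (fun θ : ℝ => 1 - exp (-(G * θ))) (G * exp (-(G * θ))) θ := by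
    have : HasDerivAt (fun θ : ℝ => -(G * θ)) (-G) θ := by
      exact ((hasDerivAt_id θ).const_mul G).neg.congr_deriv (by ring)
    have := ((Real.hasDerivAt_exp _).comp θ this)
    exact ((hasDerivAt_const θ (1:ℝ)).sub this).congr_deriv (by ring)
  have hnum := hd1.mul hd2
  have hden : HasDerivAt (fun θ : ℝ => G * θ) G θ := by
    simpa using (hasDerivAt_id θ).const_mul G
  have := hnum.div hden (by positivity)
  exact this.congr_deriv rfl

lemma deriv_alphaFun {s G θ : ℝ} (hs : 0 < s) (hG : 0 < G) (hθ : 0 < θ) :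
    deriv (alphaFun s G) θ = alphaFun s G θ * (1 / θ - hFun s G θ) := by
  rw [(alphaFun_hasDerivAt hG hθ).deriv]
  have h1 := one_sub_exp_pos hs hθ
  have h2 := one_sub_exp_pos hG hθ
  rw [mul_comm θ G] at h2
  unfold alphaFun hFun gAux
  rw [mul_comm θ G]
  generalize exp (-(θ * s)) = u at h1 ⊢
  generalize exp (-(G * θ)) = v at h2 ⊢
  field_simp [h1.ne', h2.ne']
  ring

lemma uniform_prob {G : ℝ} (hG : 0 < G) : IsProbabilityMeasure (uniformMeasure G) := by
  constructor
  rw [uniformMeasure, Measure.smul_apply, Measure.restrict_apply MeasurableSet.univ,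
    Set.univ_inter, Real.volume_Icc, smul_eq_mul, sub_zero]
  rw [ENNReal.inv_mul_cancel (by simpa using hG) ENNReal.ofReal_ne_top]

lemma integral_uniform {G : ℝ} (hG : 0 < G) (g : ℝ → ℝ) :
    ∫ t, g t ∂(uniformMeasure G) = G⁻¹ * ∫ t in (0:ℝ)..G, g t := by
  rw [uniformMeasure, integral_smul_measure, ENNReal.toReal_inv, ENNReal.toReal_ofReal hG.le,
    smul_eq_mul, intervalIntegral.integral_of_le hG.le, ← MeasureTheory.integral_Icc_eq_integral_Ioc]

noncomputable def psiKer (s c : ℝ) (p : ℝ × ℝ) : ℝ :=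
  (Icc p.2 (p.2 + s)).indicator (fun _ => p.1 - c) p.1

lemma psiKer_eq_ite (s c : ℝ) (p : ℝ × ℝ) :
    psiKer s c p = if p.2 ≤ p.1 ∧ p.1 ≤ p.2 + s then p.1 - c else 0 := by
  rw [psiKer, Set.indicator_apply]
  simp [Set.mem_Icc]

lemma measurable_psiKer (s c : ℝ) : Measurable (psiKer s c) := by
  have : psiKer s c = ({q : ℝ × ℝ | q.2 ≤ q.1 ∧ q.1 ≤ q.2 + s}).indicator (fun q => q.1 - c) := by
    funext p
    rw [psiKer_eq_ite, Set.indicator_apply]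
    simp
  rw [this]
  exact (measurable_fst.sub measurable_const).indicator
    ((measurableSet_le measurable_snd measurable_fst).inter
      (measurableSet_le measurable_fst (measurable_snd.add measurable_const)))

lemma ae_snd_mem {θ G : ℝ} (hθ : 0 < θ) (hG : 0 < G) :
    ∀ᵐ p ∂((expMeasure θ).prod (uniformMeasure G)), p.2 ∈ Icc (0:ℝ) G := by
  haveI := uniform_prob hG
  rw [ae_iff]
  have hset : {p : ℝ × ℝ | ¬ p.2 ∈ Icc (0:ℝ) G} = (Set.univ ×ˢ (Icc (0:ℝ) G)ᶜ) := by
    ext p; simp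
  rw [hset, Measure.prod_prod]
  have : uniformMeasure G ((Icc (0:ℝ) G)ᶜ) = 0 := by
    rw [uniformMeasure, Measure.smul_apply, Measure.restrict_apply measurableSet_Icc.compl,
      Set.compl_inter_self, measure_empty, smul_zero]
  rw [this, mul_zero]

lemma integrable_psiKer {θ s G : ℝ} (hθ : 0 < θ) (hs : 0 < s) (hG : 0 < G) (c : ℝ) :
    Integrable (psiKer s c) ((expMeasure θ).prod (uniformMeasure G)) := by
  haveI := uniform_prob hG
  haveI : IsProbabilityMeasure (expMeasure θ) := isProbabilityMeasure_expMeasure hθ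
  apply Integrable.mono' (integrable_const (G + s + |c|))
    (measurable_psiKer s c).aestronglyMeasurable
  filter_upwards [ae_snd_mem hθ hG] with p hp
  rw [Real.norm_eq_abs, psiKer_eq_ite]
  split_ifs with h
  · have h1 : 0 ≤ p.1 := le_trans hp.1 h.1
    have h2 : p.1 ≤ G + s := by linarith [h.2, hp.2]
    calc |p.1 - c| ≤ |p.1| + |c| := abs_sub _ _
    _ ≤ (G + s) + |c| := by
        rw [abs_of_nonneg h1]; linarith
  · simp
    positivity
/-- FTC: `∫_a^b (t+k) e^{-θ t} dt`. -/
lemma ftc_linexp {θ : ℝ} (hθ : 0 < θ) (k a b : ℝ) :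
    ∫ t in a..b, (t + k) * exp (-(θ * t)) =
      (a + k + 1/θ) * exp (-(θ * a)) / θ - (b + k + 1/θ) * exp (-(θ * b)) / θ := by
  have key : ∀ x : ℝ, HasDerivAt (fun t : ℝ => -((t + k + 1/θ) * exp (-(θ * t)) / θ))
      ((x + k) * exp (-(θ * x))) x := by
    intro x
    have h1 : HasDerivAt (fun t : ℝ => exp (-(θ * t))) (exp (-(θ * x)) * (-θ)) x := by
      have : HasDerivAt (fun t : ℝ => -(θ * t)) (-θ) x := by
        exact ((hasDerivAt_id x).const_mul θ).neg.congr_deriv (by ring)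
      exact (Real.hasDerivAt_exp _).comp x this
    have h2 : HasDerivAt (fun t : ℝ => t + k + 1/θ) 1 x := by
      simpa using ((hasDerivAt_id x).add_const k).add_const (1/θ)
    have h3 := (h2.mul h1).div_const θ |>.neg
    refine h3.congr_deriv ?_
    field_simp
    ring
  rw [intervalIntegral.integral_eq_sub_of_hasDerivAt (fun x _ => key x)
    (by apply Continuous.intervalIntegrable; continuity)]
  ring

lemma exponentialPDFReal_eq' (r x : ℝ) :
    exponentialPDFReal r x = if 0 ≤ x then r * exp (-(r * x)) else 0 := by
  rw [exponentialPDFReal, gammaPDFReal]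
  simp only [rpow_one, Real.Gamma_one, div_one, sub_self, rpow_zero, mul_one]

lemma integral_expMeasure {θ : ℝ} (hθ : 0 < θ) (g : ℝ → ℝ) :
    ∫ x, g x ∂(expMeasure θ) = ∫ x, exponentialPDFReal θ x * g x := by
  have hrepr : expMeasure θ
      = volume.withDensity (fun x => ((exponentialPDFReal θ x).toNNReal : ℝ≥0∞)) := by
    rfl
  rw [hrepr, integral_withDensity_eq_integral_smul
    ((measurable_exponentialPDFReal θ).real_toNNReal) g]
  congr 1
  funext x
  rw [NNReal.smul_def, smul_eq_mul, Real.coe_toNNReal _ (exponentialPDFReal_nonneg hθ x)]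

lemma exp_inner {θ s : ℝ} (hθ : 0 < θ) (hs : 0 < s) (c t : ℝ) (ht : 0 ≤ t) :
    ∫ x, (Icc t (t+s)).indicator (fun _ => x - c) x ∂(expMeasure θ) =
      (t - c + 1/θ) * exp (-(θ * t)) - (t + s - c + 1/θ) * exp (-(θ * (t+s))) := by
  rw [integral_expMeasure hθ]
  have hfun : (fun x => exponentialPDFReal θ x * (Icc t (t+s)).indicator (fun _ => x - c) x)
      = (Icc t (t+s)).indicator (fun x => θ * ((x + (-c)) * exp (-(θ * x)))) := by
    funext x
    by_cases hx : x ∈ Icc t (t+s)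
    · rw [Set.indicator_of_mem hx, Set.indicator_of_mem hx, exponentialPDFReal_eq',
        if_pos (le_trans ht hx.1)]
      ring
    · rw [Set.indicator_of_notMem hx, Set.indicator_of_notMem hx, mul_zero]
  rw [hfun, integral_indicator measurableSet_Icc, MeasureTheory.integral_Icc_eq_integral_Ioc,
    ← intervalIntegral.integral_of_le (by linarith : t ≤ t + s),
    intervalIntegral.integral_const_mul, ftc_linexp hθ]
  field_simp
  ring

lemma key_integral {θ s G : ℝ} (hθ : 0 < θ) (hs : 0 < s) (hG : 0 < G) (c : ℝ) :
    ∫ p, psiKer s c p ∂((expMeasure θ).prod (uniformMeasure G)) =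
      alphaFun s G θ * (hFun s G θ - c) := by
  haveI := uniform_prob hG
  haveI : IsProbabilityMeasure (expMeasure θ) := isProbabilityMeasure_expMeasure hθ
  rw [MeasureTheory.integral_prod_symm _ (integrable_psiKer hθ hs hG c)]
  have hinner : ∀ t ∈ Set.uIcc (0:ℝ) G,
      (∫ x, psiKer s c (x, t) ∂(expMeasure θ)) =
        (t - c + 1/θ) * exp (-(θ * t)) - (t + s - c + 1/θ) * exp (-(θ * (t+s))) := by
    intro t ht
    rw [Set.uIcc_of_le hG.le] at ht
    exact exp_inner hθ hs c t ht.1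
  rw [integral_uniform hG, intervalIntegral.integral_congr hinner]
  have hsplit : ∀ t : ℝ,
      (t - c + 1/θ) * exp (-(θ * t)) - (t + s - c + 1/θ) * exp (-(θ * (t+s)))
        = (t + (1/θ - c)) * exp (-(θ * t)) - exp (-(θ * s)) * ((t + (1/θ - c + s)) * exp (-(θ * t))) := by
    intro t
    rw [show -(θ * (t+s)) = -(θ*t) + -(θ*s) by ring, Real.exp_add]
    ring
  rw [intervalIntegral.integral_congr (fun t _ => hsplit t),
    intervalIntegral.integral_sub (by apply Continuous.intervalIntegrable; continuity)
      (by apply Continuous.intervalIntegrable; continuity),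
    intervalIntegral.integral_const_mul, ftc_linexp hθ, ftc_linexp hθ]
  have h1 := one_sub_exp_pos hs hθ
  have h2 := one_sub_exp_pos hG hθ
  unfold alphaFun hFun gAux
  rw [mul_comm G θ]
  rw [show -(θ * (0:ℝ)) = 0 by ring, Real.exp_zero]
  generalize exp (-(θ * s)) = u at h1 ⊢
  generalize exp (-(θ * G)) = v at h2 ⊢
  field_simp [h1.ne', h2.ne']
  ring

lemma hFun_strictAntiOn {s G : ℝ} (hs : 0 < s) (hG : 0 < G) :
    StrictAntiOn (hFun s G) (Ioi 0) := by
  intro a ha b hb hab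
  exact add_lt_add (gAux_strictAntiOn hs ha hb hab) (gAux_strictAntiOn hG ha hb hab)

lemma psiFun_eq {s G θ : ℝ} (hs : 0 < s) (hG : 0 < G) (hθ : 0 < θ) (x t : ℝ) :
    psiFun s G θ x t = psiKer s (hFun s G θ) (x, t) := by
  have hα := (alphaFun_pos hs hG hθ).ne'
  rw [psiFun, psiKer, deriv_alphaFun hs hG hθ]
  have : x - 1 / θ + alphaFun s G θ * (1 / θ - hFun s G θ) / alphaFun s G θ
      = x - hFun s G θ := by
    field_simp
    ring
  rw [this]

lemma psiFun_mono {s G θ₁ θ₂ : ℝ} (hs : 0 < s) (hG : 0 < G) (hθ₁ : 0 < θ₁)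
    (h12 : θ₁ ≤ θ₂) (x t : ℝ) : psiFun s G θ₁ x t ≤ psiFun s G θ₂ x t := by
  have hθ₂ : 0 < θ₂ := lt_of_lt_of_le hθ₁ h12
  rw [psiFun_eq hs hG hθ₁, psiFun_eq hs hG hθ₂, psiKer_eq_ite, psiKer_eq_ite]
  have hh : hFun s G θ₂ ≤ hFun s G θ₁ :=
    (hFun_strictAntiOn hs hG).antitoneOn hθ₁ hθ₂ h12
  split_ifs with h
  · linarith
  · exact le_refl _

/-- Consistency of the MLE in the truncated Exponential model: any `[ε, 1/ε]`-valued
estimator sequence that asymptotically solves the score equation `Ψ_n(θ̂_n) ≈ 0`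
converges in probability to `θ₀`. -/
theorem mle_consistency
    {Ω : Type*} [MeasurableSpace Ω] (P : Measure Ω) [IsProbabilityMeasure P]
    (ε s G θ₀ : ℝ) (hε0 : 0 < ε) (hε1 : ε < 1) (hs : 0 < s) (hG : 0 < G)
    (hθ₀ : θ₀ ∈ Set.Ioo ε (1 / ε))
    (X T : ℕ → Ω → ℝ) (hXmeas : ∀ j, Measurable (X j)) (hTmeas : ∀ j, Measurable (T j))
    (hlaw : ∀ j, P.map (fun ω => (X j ω, T j ω)) = (expMeasure θ₀).prod (uniformMeasure G))
    (hindep : iIndepFun (fun j ω => (X j ω, T j ω)) P)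
    (thetaHat : ℕ → Ω → ℝ) (hthetaMeas : ∀ n, Measurable (thetaHat n))
    (hrange : ∀ n ω, thetaHat n ω ∈ Set.Icc ε (1 / ε))
    (hscore : TendstoInMeasure P
      (fun (n : ℕ) ω => (1 / (n : ℝ)) * ∑ j ∈ Finset.range n,
        psiFun s G (thetaHat n ω) (X j ω) (T j ω))
      atTop (fun _ => 0)) :
    TendstoInMeasure P (fun n ω => thetaHat n ω) atTop (fun _ => θ₀) := by
  obtain ⟨hθ₀ε, hθ₀ε'⟩ := hθ₀
  have hθ₀pos : 0 < θ₀ := lt_trans hε0 hθ₀ε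
  haveI := uniform_prob hG
  haveI : IsProbabilityMeasure (expMeasure θ₀) := isProbabilityMeasure_expMeasure hθ₀pos
  have hpairmeas : ∀ j, Measurable (fun ω => (X j ω, T j ω)) :=
    fun j => (hXmeas j).prodMk (hTmeas j)
  -- Law of large numbers for each fixed parameter value
  have lln : ∀ θ' : ℝ, 0 < θ' →
      ∀ᵐ ω ∂P, Tendsto (fun n : ℕ => (1 / (n:ℝ)) * ∑ j ∈ Finset.range n,
          psiKer s (hFun s G θ') (X j ω, T j ω)) atTop
        (𝓝 (alphaFun s G θ₀ * (hFun s G θ₀ - hFun s G θ'))) := by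
    intro θ' hθ'
    set c := hFun s G θ' with hc
    set Y : ℕ → Ω → ℝ := fun j ω => psiKer s c (X j ω, T j ω) with hY
    have hint : Integrable (Y 0) P := by
      have h0 : Integrable (psiKer s c) (P.map (fun ω => (X 0 ω, T 0 ω))) := by
        rw [hlaw 0]; exact integrable_psiKer hθ₀pos hs hG c
      rw [integrable_map_measure (measurable_psiKer s c).aestronglyMeasurable
        (hpairmeas 0).aemeasurable] at h0
      exact h0
    have hid : ∀ i, IdentDistrib (Y i) (Y 0) P P := by
      intro i
      refine IdentDistrib.comp ?_ (measurable_psiKer s c)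
      exact ⟨(hpairmeas i).aemeasurable, (hpairmeas 0).aemeasurable, by rw [hlaw i, hlaw 0]⟩
    have hpind : Pairwise (Function.onFun (IndepFun · · P) Y) := fun i j hij =>
      (hindep.indepFun hij).comp (measurable_psiKer s c) (measurable_psiKer s c)
    have hmean : (∫ ω, Y 0 ω ∂P) = alphaFun s G θ₀ * (hFun s G θ₀ - c) := by
      have h1 : ∫ ω, Y 0 ω ∂P = ∫ p, psiKer s c p ∂(P.map (fun ω => (X 0 ω, T 0 ω))) :=
        (integral_map (hpairmeas 0).aemeasurable
          (measurable_psiKer s c).aestronglyMeasurable).symm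
      rw [h1, hlaw 0, key_integral hθ₀pos hs hG c]
    filter_upwards [strong_law_ae_real Y hint hpind hid] with ω hω
    rw [hmean] at hω
    convert hω using 2 with n
    rw [one_div, inv_mul_eq_div]
  rw [tendstoInMeasure_iff_dist] at hscore ⊢
  intro η hη
  -- bracketing points
  set θhi := min ((θ₀ + 1/ε)/2) (θ₀ + η) with hθhidef
  set θlo := max ((ε + θ₀)/2) (θ₀ - η) with hθlodef
  have hθhi1 : θ₀ < θhi := lt_min (by linarith) (by linarith)
  have hθhipos : 0 < θhi := lt_trans hθ₀pos hθhi1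
  have hθhi2 : θhi ≤ θ₀ + η := min_le_right _ _
  have hθlo1 : θlo < θ₀ := max_lt (by linarith) (by linarith)
  have hθloε : ε < θlo := lt_of_lt_of_le (by linarith) (le_max_left _ _)
  have hθlopos : 0 < θlo := lt_trans hε0 hθloε
  have hθlo2 : θ₀ - η ≤ θlo := le_max_right _ _
  set δp := alphaFun s G θ₀ * (hFun s G θ₀ - hFun s G θhi) with hδpdef
  set δm := alphaFun s G θ₀ * (hFun s G θlo - hFun s G θ₀) with hδmdef
  have hδp : 0 < δp := mul_pos (alphaFun_pos hs hG hθ₀pos)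
    (sub_pos.2 (hFun_strictAntiOn hs hG hθ₀pos hθhipos hθhi1))
  have hδm : 0 < δm := mul_pos (alphaFun_pos hs hG hθ₀pos)
    (sub_pos.2 (hFun_strictAntiOn hs hG hθlopos hθ₀pos hθlo1))
  -- the empirical score processes at the bracketing points
  set Fhi : ℕ → Ω → ℝ := fun n ω => (1 / (n:ℝ)) * ∑ j ∈ Finset.range n,
      psiKer s (hFun s G θhi) (X j ω, T j ω) with hFhidef
  set Flo : ℕ → Ω → ℝ := fun n ω => (1 / (n:ℝ)) * ∑ j ∈ Finset.range n,
      psiKer s (hFun s G θlo) (X j ω, T j ω) with hFlodef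
  set Sc : ℕ → Ω → ℝ := fun n ω => (1 / (n:ℝ)) * ∑ j ∈ Finset.range n,
      psiFun s G (thetaHat n ω) (X j ω) (T j ω) with hScdef
  have hFmeas : ∀ (c : ℝ) (n : ℕ), AEStronglyMeasurable
      (fun ω => (1 / (n:ℝ)) * ∑ j ∈ Finset.range n, psiKer s c (X j ω, T j ω)) P := by
    intro c n
    exact (Measurable.const_mul (Finset.measurable_sum _
      (fun j _ => (measurable_psiKer s c).comp (hpairmeas j))) _).aestronglyMeasurable
  have tendhi : TendstoInMeasure P Fhi atTop (fun _ => δp) := by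
    apply tendstoInMeasure_of_tendsto_ae (fun n => hFmeas _ n)
    filter_upwards [lln θhi hθhipos] with ω hω using hω
  have tendlo : TendstoInMeasure P Flo atTop (fun _ => -δm) := by
    apply tendstoInMeasure_of_tendsto_ae (fun n => hFmeas _ n)
    filter_upwards [lln θlo hθlopos] with ω hω
    have : alphaFun s G θ₀ * (hFun s G θ₀ - hFun s G θlo) = -δm := by
      rw [hδmdef]; ring
    rw [this] at hω
    exact hω
  -- the four exceptional events
  have hsub : ∀ n, {ω | η ≤ dist (thetaHat n ω) θ₀} ⊆
      ({ω | δp/2 ≤ dist (Sc n ω) 0} ∪ {ω | δp/2 ≤ dist (Fhi n ω) δp}) ∪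
      ({ω | δm/2 ≤ dist (Sc n ω) 0} ∪ {ω | δm/2 ≤ dist (Flo n ω) (-δm)}) := by
    intro n ω hω
    simp only [mem_setOf_eq, mem_union]
    by_contra hcon
    push_neg at hcon
    obtain ⟨⟨hA, hB⟩, hC, hD⟩ := hcon
    rw [Real.dist_eq, sub_zero] at hA hC
    rw [Real.dist_eq] at hB hD
    have hωmem := hrange n ω
    rw [mem_setOf_eq, Real.dist_eq] at hω
    rcases le_abs.mp hω with h1 | h1
    · -- thetaHat ≥ θ₀ + η ≥ θhi : monotonicity gives Fhi ≤ Sc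
      have hth : θhi ≤ thetaHat n ω := by linarith
      have hmono : Fhi n ω ≤ Sc n ω := by
        rw [hFhidef, hScdef]
        apply mul_le_mul_of_nonneg_left _ (by positivity)
        apply Finset.sum_le_sum
        intro j _
        rw [← psiFun_eq hs hG hθhipos]
        exact psiFun_mono hs hG hθhipos hth _ _
      have h2 : Fhi n ω > δp / 2 := by
        have := abs_lt.mp hB
        linarith [this.1]
      have h3 : Sc n ω < δp / 2 := (abs_lt.mp hA).2
      linarith
    · -- thetaHat ≤ θ₀ - η ≤ θlo : monotonicity gives Sc ≤ Flo
      have hth : thetaHat n ω ≤ θlo := by linarith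
      have hthpos : 0 < thetaHat n ω := lt_of_lt_of_le hε0 hωmem.1
      have hmono : Sc n ω ≤ Flo n ω := by
        rw [hFlodef, hScdef]
        apply mul_le_mul_of_nonneg_left _ (by positivity)
        apply Finset.sum_le_sum
        intro j _
        rw [← psiFun_eq hs hG hθlopos]
        exact psiFun_mono hs hG hthpos hth _ _
      have h2 : Flo n ω < -(δm / 2) := by
        have := abs_lt.mp hD
        linarith [this.2]
      have h3 : Sc n ω > -(δm / 2) := (abs_lt.mp hC).1
      linarith
  -- combine the four convergences
  have hlim : Tendsto (fun n =>
      (P {ω | δp/2 ≤ dist (Sc n ω) 0} + P {ω | δp/2 ≤ dist (Fhi n ω) δp}) +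
      (P {ω | δm/2 ≤ dist (Sc n ω) 0} + P {ω | δm/2 ≤ dist (Flo n ω) (-δm)}))
      atTop (𝓝 0) := by
    have h1 := hscore (δp/2) (by positivity)
    have h2 := (tendstoInMeasure_iff_dist.1 tendhi (δp/2) (by positivity))
    have h3 := hscore (δm/2) (by positivity)
    have h4 := (tendstoInMeasure_iff_dist.1 tendlo (δm/2) (by positivity))
    have := ((h1.add h2).add (h3.add h4))
    rw [show (0:ℝ≥0∞) = 0 + 0 + (0 + 0) by simp]
    exact this
  apply tendsto_of_tendsto_of_tendsto_of_le_of_le tendsto_const_nhds hlim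
    (fun n => zero_le)
  intro n
  calc P {ω | η ≤ dist (thetaHat n ω) θ₀} ≤
      P (({ω | δp/2 ≤ dist (Sc n ω) 0} ∪ {ω | δp/2 ≤ dist (Fhi n ω) δp}) ∪
        ({ω | δm/2 ≤ dist (Sc n ω) 0} ∪ {ω | δm/2 ≤ dist (Flo n ω) (-δm)})) :=
      measure_mono (hsub n)
  _ ≤ (P {ω | δp/2 ≤ dist (Sc n ω) 0} + P {ω | δp/2 ≤ dist (Fhi n ω) δp}) +
      (P {ω | δm/2 ≤ dist (Sc n ω) 0} + P {ω | δm/2 ≤ dist (Flo n ω) (-δm)}) :=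
    le_trans (measure_union_le _ _) (add_le_add (measure_union_le _ _) (measure_union_le _ _))
end
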